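/- Suppose X = F(Y) a.s. for a Borel F : S2 → S1 and X is C-compatible with Y. Then F^X_α ⊆ F^Y_α for every α ∈ A. Conversely, if F^X_α ⊆ F^Y_α for each α ∈ A and σ(X) ⊆ ∨_{α∈A} F^X_α, then X is C-compatible with Y and X = F(Y) a.s. for some Borel measurable F. -/

import Mathlib

open MeasureTheory ProbabilityTheory MeasurableSpace
open scoped symmDiff

/-- `s` belongs to the `P`-completion of the σ-algebra `m`. -/
def InCompletion {Ω : Type} [MeasurableSpace Ω] (P : Measure Ω)
    (m : MeasurableSpace Ω) (s : Set Ω) : Prop :=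
  ∃ t, MeasurableSet[m] t ∧ P (s ∆ t) = 0

namespace Stmt10Aux

variable {Ω : Type} [m0 : MeasurableSpace Ω] {P : Measure Ω}

lemma inCompletion_mono {n n' : MeasurableSpace Ω} (h : n ≤ n') {s : Set Ω}
    (hs : @InCompletion Ω m0 P n s) : @InCompletion Ω m0 P n' s := by
  obtain ⟨t, ht, h0⟩ := hs
  exact ⟨t, h _ ht, h0⟩

/-- The sets in the completion of `n` form a σ-algebra. -/
def completionMS (P : Measure Ω) (n : MeasurableSpace Ω) : MeasurableSpace Ω where
  MeasurableSet' := fun s => @InCompletion Ω m0 P n s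
  measurableSet_empty := ⟨∅, @MeasurableSet.empty _ n, by simp⟩
  measurableSet_compl := by
    rintro s ⟨t, ht, h0⟩
    exact ⟨tᶜ, ht.compl, by rwa [compl_symmDiff_compl]⟩
  measurableSet_iUnion := by
    intro f hf
    have hf' : ∀ i, ∃ t, MeasurableSet[n] t ∧ P (f i ∆ t) = 0 := hf
    choose t ht h0 using hf' 
    refine ⟨⋃ i, t i, MeasurableSet.iUnion ht, ?_⟩
    refine measure_mono_null ?_ (measure_iUnion_null h0)
    intro x hx
    rw [Set.mem_symmDiff] at hx
    rcases hx with ⟨hx1, hx2⟩ | ⟨hx1, hx2⟩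
    · obtain ⟨i, hi⟩ := Set.mem_iUnion.1 hx1
      refine Set.mem_iUnion.2 ⟨i, ?_⟩
      rw [Set.mem_symmDiff]
      exact Or.inl ⟨hi, fun h => hx2 (Set.mem_iUnion.2 ⟨i, h⟩)⟩
    · obtain ⟨i, hi⟩ := Set.mem_iUnion.1 hx1
      refine Set.mem_iUnion.2 ⟨i, ?_⟩
      rw [Set.mem_symmDiff]
      exact Or.inr ⟨hi, fun h => hx2 (Set.mem_iUnion.2 ⟨i, h⟩)⟩

lemma inCompletion_trans {m n : MeasurableSpace Ω} {s : Set Ω}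
    (hs : @InCompletion Ω m0 P m s) (h : ∀ t : Set Ω, MeasurableSet[m] t → @InCompletion Ω m0 P n t) :
    @InCompletion Ω m0 P n s := by
  obtain ⟨t, ht, h0⟩ := hs
  obtain ⟨u, hu, h0'⟩ := h t ht
  exact ⟨u, hu, measure_mono_null (symmDiff_triangle s t u)
    (measure_union_null h0 h0')⟩

lemma bounded_integrable [IsProbabilityMeasure P] {f : Ω → ℝ} (hf : Measurable f)
    {C : ℝ} (hbd : ∀ ω, |f ω| ≤ C) : Integrable f P := by
  refine Integrable.mono' (integrable_const C) hf.aestronglyMeasurable ?_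
  exact Filter.Eventually.of_forall fun ω => by simpa using hbd ω

lemma null_of_setIntegral_pos {f : Ω → ℝ} {D : Set Ω} (hD : MeasurableSet D)
    (hf : Integrable f P) (hpos : ∀ ω ∈ D, 0 < f ω)
    (hint : ∫ ω in D, f ω ∂P = 0) : P D = 0 := by
  have hind : Integrable (D.indicator f) P := hf.indicator hD
  have hnn : 0 ≤ᵐ[P] D.indicator f := by
    refine Filter.Eventually.of_forall fun ω => ?_
    by_cases h : ω ∈ D
    · simp only [Set.indicator_of_mem h]; exact (hpos ω h).le
    · simp [Set.indicator_of_notMem h]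
  have hzero : ∫ ω, D.indicator f ω ∂P = 0 := by
    rw [integral_indicator hD]; exact hint
  have h0 : ∀ᵐ ω ∂P, D.indicator f ω = 0 :=
    (integral_eq_zero_iff_of_nonneg_ae hnn hind).1 hzero
  refine measure_mono_null (fun ω hω => ?_) (ae_iff.mp h0)
  simp only [Set.mem_setOf_eq, Set.indicator_of_mem hω]
  exact ne_of_gt (hpos ω hω)

end Stmt10Aux

namespace Stmt10Aux

open scoped Classical

/-- Doob–Dynkin for bounded real functions measurable w.r.t. `comap Y`. -/
lemma factor {Ω S2 : Type} {m2 : MeasurableSpace S2} {Y : Ω → S2} {W : Ω → ℝ}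
    (hW : Measurable[m2.comap Y] W) (hbd : ∀ ω, |W ω| ≤ 2) :
    ∃ φ : S2 → ℝ, Measurable[m2] φ ∧ ∀ ω, φ (Y ω) = W ω := by
  have hD : ∀ q : ℚ, ∃ C, MeasurableSet[m2] C ∧ Y ⁻¹' C = {ω | W ω < q} := by
    intro q
    exact MeasurableSpace.measurableSet_comap.mp (hW measurableSet_Iio)
  choose D hDm hDp using hD
  refine ⟨fun y => ⨅ q : ℚ, (D q).piecewise (fun _ => max (q : ℝ) (-2)) (fun _ => (2 : ℝ)) y,
    Measurable.iInf fun q => Measurable.piecewise (hDm q) measurable_const measurable_const,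
    fun ω => ?_⟩
  have hmem : ∀ q : ℚ, Y ω ∈ D q ↔ W ω < q := by
    intro q
    constructor
    · intro h
      have : ω ∈ Y ⁻¹' D q := h
      rw [hDp q] at this; exact this
    · intro h
      have : ω ∈ Y ⁻¹' D q := by rw [hDp q]; exact h
      exact this
  have hbd1 : -2 ≤ W ω := neg_le_of_abs_le (hbd ω)
  have hbd2 : W ω ≤ 2 := le_of_abs_le (hbd ω)
  have hval : ∀ q : ℚ, (D q).piecewise (fun _ => max (q : ℝ) (-2)) (fun _ => (2 : ℝ)) (Y ω)
      = if W ω < q then max (q : ℝ) (-2) else 2 := by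
    intro q
    by_cases h : W ω < q
    · rw [Set.piecewise_eq_of_mem _ _ _ ((hmem q).mpr h), if_pos h]
    · rw [Set.piecewise_eq_of_notMem _ _ _ (fun hc => h ((hmem q).mp hc)), if_neg h]
  dsimp only
  rw [iInf_congr hval]
  have hBdd : BddBelow (Set.range fun q : ℚ => if W ω < q then max (q : ℝ) (-2) else 2) := by
    refine ⟨-2, fun x hx => ?_⟩
    obtain ⟨q, rfl⟩ := hx
    dsimp only
    by_cases h : W ω < q
    · rw [if_pos h]; exact le_max_right _ _
    · rw [if_neg h]; norm_num
  refine le_antisymm ?_ ?_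
  · by_contra hc
    push_neg at hc
    obtain ⟨q, hq1, hq2⟩ := exists_rat_btwn hc
    have h1 : (⨅ q : ℚ, if W ω < q then max (q : ℝ) (-2) else 2) ≤ max (q : ℝ) (-2) := by
      have := ciInf_le hBdd q
      rwa [if_pos hq1] at this
    have : max (q : ℝ) (-2) = q := max_eq_left (le_trans hbd1 (le_of_lt hq1))
    rw [this] at h1
    exact absurd (lt_of_le_of_lt h1 hq2) (lt_irrefl _)
  · refine le_ciInf fun q => ?_
    by_cases h : W ω < q
    · rw [if_pos h]; exact le_trans (le_of_lt h) (le_max_left _ _)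
    · rw [if_neg h]; exact hbd2

end Stmt10Aux

namespace Stmt10Aux

lemma ae_eq_condexp_of_inCompletion {Ω : Type} {n m0 : MeasurableSpace Ω} (P : Measure Ω)
    [IsProbabilityMeasure P] (hn : n ≤ m0) {Z : Ω → ℝ}
    (hZ : Measurable Z) {C : ℝ} (hbd : ∀ ω, |Z ω| ≤ C)
    (h : ∀ q : ℚ, @InCompletion Ω m0 P n {ω | Z ω < q}) :
    Z =ᵐ[P] P[Z|n] := by
  have hZint : Integrable Z P := bounded_integrable hZ hbd
  set W := P[Z|n] with hWdef
  have hWsm : StronglyMeasurable[n] W := stronglyMeasurable_condExp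
  have hWm : Measurable[n] W := hWsm.measurable
  have hWm0 : Measurable W := hWm.mono hn le_rfl
  have hWint : Integrable W P := integrable_condExp
  have h' : ∀ q : ℚ, ∃ t, MeasurableSet[n] t ∧ P ({ω | Z ω < (q : ℝ)} ∆ t) = 0 := h
  choose t ht h0 using h'
  have haet : ∀ q : ℚ, {ω | Z ω < (q : ℝ)} =ᵐ[P] t q := fun q =>
    measure_symmDiff_eq_zero_iff.mp (h0 q)
  have key1 : ∀ q : ℚ, P ({ω | Z ω < (q : ℝ)} ∩ {ω | (q : ℝ) ≤ W ω}) = 0 := by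
    intro q
    set D : Set Ω := t q ∩ {ω | (q : ℝ) ≤ W ω} with hD
    have hDn : MeasurableSet[n] D := (ht q).inter (hWm measurableSet_Ici)
    set D' : Set Ω := {ω | Z ω < (q : ℝ)} ∩ {ω | (q : ℝ) ≤ W ω} with hD'
    have hae : D' =ᵐ[P] D := ae_eq_set_inter (haet q) (Filter.EventuallyEq.refl _ _)
    have hD'm : MeasurableSet D' :=
      (hZ measurableSet_Iio).inter (hWm0 measurableSet_Ici)
    have hint : ∫ ω in D', (W ω - Z ω) ∂P = 0 := by
      have e0 : ∫ ω in D, W ω ∂P = ∫ ω in D, Z ω ∂P := setIntegral_condExp hn hZint hDn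
      have e1 : ∫ ω in D', W ω ∂P = ∫ ω in D, W ω ∂P := setIntegral_congr_set hae
      have e2 : ∫ ω in D', Z ω ∂P = ∫ ω in D, Z ω ∂P := setIntegral_congr_set hae
      rw [integral_sub hWint.integrableOn hZint.integrableOn, e1, e2, e0, sub_self]
    refine null_of_setIntegral_pos hD'm (hWint.sub hZint) ?_ hint
    rintro ω ⟨h1, h2⟩
    simp only [Pi.sub_apply]
    have : Z ω < (q : ℝ) := h1
    linarith [Set.mem_setOf_eq ▸ h2]
  have key2 : ∀ q : ℚ, P ({ω | W ω < (q : ℝ)} ∩ {ω | (q : ℝ) ≤ Z ω}) = 0 := by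
    intro q
    set D : Set Ω := {ω | W ω < (q : ℝ)} ∩ (t q)ᶜ with hD
    have hDn : MeasurableSet[n] D := (hWm measurableSet_Iio).inter (ht q).compl
    set D' : Set Ω := {ω | W ω < (q : ℝ)} ∩ {ω | (q : ℝ) ≤ Z ω} with hD'
    have hcompl : ({ω | Z ω < (q : ℝ)} : Set Ω)ᶜ = {ω | (q : ℝ) ≤ Z ω} := by
      ext ω; simp [not_lt]
    have hae : D' =ᵐ[P] D := by
      refine ae_eq_set_inter (Filter.EventuallyEq.refl _ _) ?_
      rw [← hcompl]
      exact (ae_eq_set_compl_compl).mpr (haet q) |>.symm |>.symm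
    have hD'm : MeasurableSet D' :=
      (hWm0 measurableSet_Iio).inter (hZ measurableSet_Ici)
    have hint : ∫ ω in D', (Z ω - W ω) ∂P = 0 := by
      have e0 : ∫ ω in D, W ω ∂P = ∫ ω in D, Z ω ∂P := setIntegral_condExp hn hZint hDn
      have e1 : ∫ ω in D', W ω ∂P = ∫ ω in D, W ω ∂P := setIntegral_congr_set hae
      have e2 : ∫ ω in D', Z ω ∂P = ∫ ω in D, Z ω ∂P := setIntegral_congr_set hae
      rw [integral_sub hZint.integrableOn hWint.integrableOn, e1, e2, e0, sub_self]
    refine null_of_setIntegral_pos hD'm (hZint.sub hWint) ?_ hint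
    rintro ω ⟨h1, h2⟩
    simp only [Pi.sub_apply]
    have : W ω < (q : ℝ) := h1
    linarith [Set.mem_setOf_eq ▸ h2]
  have hsub : {ω | Z ω ≠ W ω} ⊆
      ⋃ q : ℚ, ({ω | Z ω < (q : ℝ)} ∩ {ω | (q : ℝ) ≤ W ω}) ∪
        ({ω | W ω < (q : ℝ)} ∩ {ω | (q : ℝ) ≤ Z ω}) := by
    intro ω hω
    rcases lt_or_gt_of_ne hω with hlt | hgt
    · obtain ⟨q, hq1, hq2⟩ := exists_rat_btwn hlt
      exact Set.mem_iUnion.2 ⟨q, Or.inl ⟨hq1, le_of_lt hq2⟩⟩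
    · obtain ⟨q, hq1, hq2⟩ := exists_rat_btwn hgt
      exact Set.mem_iUnion.2 ⟨q, Or.inr ⟨hq1, le_of_lt hq2⟩⟩
  have hnull : P {ω | Z ω ≠ W ω} = 0 :=
    measure_mono_null hsub
      (measure_iUnion_null fun q => measure_union_null (key1 q) (key2 q))
  exact ae_iff.mpr hnull

end Stmt10Aux

namespace Stmt10Aux

lemma condexp_sup_of_inCompletion {Ω : Type} {m n m0 : MeasurableSpace Ω} (P : Measure Ω)
    [IsProbabilityMeasure P] (hm : m ≤ m0) (hn : n ≤ m0)
    (hsub : ∀ s : Set Ω, MeasurableSet[m] s → @InCompletion Ω m0 P n s)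
    {f : Ω → ℝ} (hf : Integrable f P) :
    P[f | m ⊔ n] =ᵐ[P] P[f | n] := by
  have hmn : m ⊔ n ≤ m0 := sup_le hm hn
  have hall : ∀ s : Set Ω, MeasurableSet[m ⊔ n] s → @InCompletion Ω m0 P n s := by
    have hle : m ⊔ n ≤ @completionMS Ω m0 P n := by
      refine sup_le (fun s hs => hsub s hs) (fun s hs => ⟨s, hs, by simp⟩)
    exact fun s hs => hle s hs
  refine (ae_eq_condExp_of_forall_setIntegral_eq hmn hf ?_ ?_ ?_).symm
  · exact fun s _ _ => integrable_condExp.integrableOn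
  · intro s hs _
    obtain ⟨t, htn, h0⟩ := hall s hs
    have hst : s =ᵐ[P] t := measure_symmDiff_eq_zero_iff.mp h0
    calc ∫ ω in s, (P[f|n]) ω ∂P = ∫ ω in t, (P[f|n]) ω ∂P := setIntegral_congr_set hst
      _ = ∫ ω in t, f ω ∂P := setIntegral_condExp hn hf htn
      _ = ∫ ω in s, f ω ∂P := (setIntegral_congr_set hst).symm
  · exact AEStronglyMeasurable.mono le_sup_right
      (stronglyMeasurable_condExp.aestronglyMeasurable)

end Stmt10Aux


open Stmt10Aux

/-- Proposition 2.13 of Kurtz: a strong compatible solution satisfies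
`F^X_α ⊆ F^Y_α` (completions); conversely, `F^X_α ⊆ F^Y_α` together with
`σ(X) ⊆ ∨_α F^X_α` (completions) yields a strong compatible solution. -/
theorem stmt10
    {S1 S2 : Type} [mS1 : MeasurableSpace S1] [TopologicalSpace S1] [PolishSpace S1] [BorelSpace S1]
    [mS2 : MeasurableSpace S2] [TopologicalSpace S2] [PolishSpace S2] [BorelSpace S2]
    {Ω : Type} [MeasurableSpace Ω] (P : Measure Ω) [IsProbabilityMeasure P]
    (X : Ω → S1) (Y : Ω → S2) (hX : Measurable X) (hY : Measurable Y)
    {A : Type}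
    (B1 : A → MeasurableSpace S1) (hB1 : ∀ α, B1 α ≤ mS1)
    (B2 : A → MeasurableSpace S2) (hB2 : ∀ α, B2 α ≤ mS2) :
    -- forward direction: strong + compatible implies F^X_α ⊆ F^Y_α (mod null sets)
    ((∃ F : S2 → S1, Measurable F ∧ X =ᵐ[P] fun ω => F (Y ω)) →
      (∀ (α : A) (h : S2 → ℝ), Measurable h → (∃ C, ∀ x, |h x| ≤ C) →
        P[fun ω => h (Y ω)|MeasurableSpace.comap X (B1 α) ⊔ MeasurableSpace.comap Y (B2 α)]
          =ᵐ[P] P[fun ω => h (Y ω)|MeasurableSpace.comap Y (B2 α)]) →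
      ∀ (α : A) (s : Set Ω), MeasurableSet[MeasurableSpace.comap X (B1 α)] s →
        InCompletion P (MeasurableSpace.comap Y (B2 α)) s)
    ∧
    -- converse: F^X_α ⊆ F^Y_α (mod null sets) and σ(X) ⊆ ∨_α F^X_α (mod null sets)
    -- imply compatibility and X = F(Y) a.s.
    ((∀ (α : A) (s : Set Ω), MeasurableSet[MeasurableSpace.comap X (B1 α)] s →
        InCompletion P (MeasurableSpace.comap Y (B2 α)) s) →
      (∀ s : Set Ω, MeasurableSet[MeasurableSpace.comap X mS1] s →
        InCompletion P (⨆ α : A, MeasurableSpace.comap X (B1 α)) s) →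
      ((∀ (α : A) (h : S2 → ℝ), Measurable h → (∃ C, ∀ x, |h x| ≤ C) →
        P[fun ω => h (Y ω)|MeasurableSpace.comap X (B1 α) ⊔ MeasurableSpace.comap Y (B2 α)]
          =ᵐ[P] P[fun ω => h (Y ω)|MeasurableSpace.comap Y (B2 α)])
        ∧ ∃ F : S2 → S1, Measurable F ∧ X =ᵐ[P] fun ω => F (Y ω))) := by
  constructor
  · -- forward direction
    rintro ⟨F, hF, hXF⟩ hcompat α s hs
    classical
    obtain ⟨B, hB, rfl⟩ := hs
    have hBb : MeasurableSet B := hB1 α B hB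
    have hm : MeasurableSpace.comap X (B1 α) ≤ ‹MeasurableSpace Ω› :=
      (MeasurableSpace.comap_mono (hB1 α)).trans hX.comap_le
    have hn : MeasurableSpace.comap Y (B2 α) ≤ ‹MeasurableSpace Ω› :=
      (MeasurableSpace.comap_mono (hB2 α)).trans hY.comap_le
    set h : S2 → ℝ := (F ⁻¹' B).indicator (fun _ => (1 : ℝ)) with hhdef
    have hhm : Measurable h := measurable_const.indicator (hF hBb)
    have hhbd : ∃ C, ∀ x, |h x| ≤ C := by
      refine ⟨1, fun x => ?_⟩
      by_cases hx : x ∈ F ⁻¹' B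
      · simp [hhdef, Set.indicator_of_mem hx]
      · simp [hhdef, Set.indicator_of_notMem hx]
    have hc := hcompat α h hhm hhbd
    have haeeq : (fun ω => h (Y ω)) =ᵐ[P] (X ⁻¹' B).indicator (fun _ => (1 : ℝ)) := by
      filter_upwards [hXF] with ω hω
      rw [hhdef, Set.indicator_apply, Set.indicator_apply]
      simp only [Set.mem_preimage, hω]
    have hsm : MeasurableSet[MeasurableSpace.comap X (B1 α)] (X ⁻¹' B) := ⟨B, hB, rfl⟩
    have hsm' : MeasurableSet[MeasurableSpace.comap X (B1 α) ⊔
        MeasurableSpace.comap Y (B2 α)] (X ⁻¹' B) :=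
      (le_sup_left : MeasurableSpace.comap X (B1 α) ≤ _) _ hsm
    have hint : Integrable (fun ω => h (Y ω)) P := by
      obtain ⟨C, hC⟩ := hhbd
      exact bounded_integrable (hhm.comp hY) (fun ω => hC (Y ω))
    have hasm : AEStronglyMeasurable[MeasurableSpace.comap X (B1 α) ⊔
        MeasurableSpace.comap Y (B2 α)] (fun ω => h (Y ω)) P :=
      ⟨(X ⁻¹' B).indicator (fun _ => (1 : ℝ)),
        stronglyMeasurable_const.indicator hsm', haeeq⟩
    have hcondL : P[fun ω => h (Y ω)|MeasurableSpace.comap X (B1 α) ⊔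
        MeasurableSpace.comap Y (B2 α)] =ᵐ[P] fun ω => h (Y ω) :=
      condExp_of_aestronglyMeasurable' (sup_le hm hn) hasm hint
    have hfinal : (X ⁻¹' B).indicator (fun _ => (1 : ℝ)) =ᵐ[P]
        P[fun ω => h (Y ω)|MeasurableSpace.comap Y (B2 α)] :=
      haeeq.symm.trans ((hcondL.symm.trans hc))
    refine ⟨{ω | (P[fun ω => h (Y ω)|MeasurableSpace.comap Y (B2 α)]) ω = 1}, ?_, ?_⟩
    · exact (stronglyMeasurable_condExp.measurable) (measurableSet_singleton 1)
    · refine measure_mono_null (fun ω hω => ?_) (ae_iff.mp hfinal)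
      rw [Set.mem_symmDiff] at hω
      simp only [Set.mem_setOf_eq]
      rcases hω with ⟨hω1, hω2⟩ | ⟨hω1, hω2⟩
      · rw [Set.indicator_of_mem hω1]
        exact fun hc' => hω2 (Set.mem_setOf_eq ▸ hc'.symm)
      · rw [Set.indicator_of_notMem hω2]
        have : (P[fun ω => h (Y ω)|MeasurableSpace.comap Y (B2 α)]) ω = 1 := hω1
        rw [this]; norm_num
  · -- converse direction
    intro h1 h2
    constructor
    · intro α h hhm hhbd
      have hm : MeasurableSpace.comap X (B1 α) ≤ ‹MeasurableSpace Ω› :=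
        (MeasurableSpace.comap_mono (hB1 α)).trans hX.comap_le
      have hn : MeasurableSpace.comap Y (B2 α) ≤ ‹MeasurableSpace Ω› :=
        (MeasurableSpace.comap_mono (hB2 α)).trans hY.comap_le
      obtain ⟨C, hC⟩ := hhbd
      exact condexp_sup_of_inCompletion P hm hn (h1 α)
        (bounded_integrable (hhm.comp hY) (fun ω => hC (Y ω)))
    · -- strong solution
      rcases isEmpty_or_nonempty Ω with hE | hN
      · exfalso
        have h1' : P Set.univ = 1 := measure_univ
        rw [Set.univ_eq_empty_iff.mpr hE, measure_empty] at h1'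
        exact zero_ne_one h1'
      haveI : Nonempty S1 := ⟨X (Classical.arbitrary Ω)⟩
      obtain ⟨ι, hι⟩ := exists_measurableEmbedding_real S1
      have hι'm : Measurable (fun x => Real.arctan (ι x)) :=
        Real.measurable_arctan.comp hι.measurable
      have hι'inj : Function.Injective (fun x => Real.arctan (ι x)) :=
        fun a b hab => hι.injective (Real.arctan_injective hab)
      have hι'emb : MeasurableEmbedding (fun x => Real.arctan (ι x)) :=
        hι'm.measurableEmbedding hι'inj
      have hZm : Measurable (fun ω => Real.arctan (ι (X ω))) := hι'm.comp hX
      have hZbd : ∀ ω, |Real.arctan (ι (X ω))| ≤ 2 := by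
        intro ω
        have h1' := Real.arctan_lt_pi_div_two (ι (X ω))
        have h2' := Real.neg_pi_div_two_lt_arctan (ι (X ω))
        have := Real.pi_le_four
        rw [abs_le]; constructor <;> linarith
      have hn' : MeasurableSpace.comap Y mS2 ≤ ‹MeasurableSpace Ω› := hY.comap_le
      have hq : ∀ q : ℚ, InCompletion P (MeasurableSpace.comap Y mS2)
          {ω | Real.arctan (ι (X ω)) < (q : ℝ)} := by
        intro q
        have hsq : MeasurableSet[MeasurableSpace.comap X mS1]
            {ω | Real.arctan (ι (X ω)) < (q : ℝ)} :=
          ⟨(fun x => Real.arctan (ι x)) ⁻¹' Set.Iio (q : ℝ), hι'm measurableSet_Iio, rfl⟩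
        refine inCompletion_trans (h2 _ hsq) ?_
        intro t ht
        have hle : (⨆ α : A, MeasurableSpace.comap X (B1 α)) ≤
            completionMS P (MeasurableSpace.comap Y mS2) := by
          refine iSup_le fun α => fun s hs => ?_
          exact inCompletion_mono (MeasurableSpace.comap_mono (hB2 α)) (h1 α s hs)
        exact hle t ht
      have hZW : (fun ω => Real.arctan (ι (X ω))) =ᵐ[P]
          P[fun ω => Real.arctan (ι (X ω))|MeasurableSpace.comap Y mS2] :=
        ae_eq_condexp_of_inCompletion P hn' hZm hZbd hq
      set W0 := P[fun ω => Real.arctan (ι (X ω))|MeasurableSpace.comap Y mS2] with hW0def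
      have hW0m : Measurable[MeasurableSpace.comap Y mS2] W0 :=
        stronglyMeasurable_condExp.measurable
      have hWm : Measurable[MeasurableSpace.comap Y mS2]
          (fun ω => max (min (W0 ω) 2) (-2)) :=
        (hW0m.min measurable_const).max measurable_const
      have hWbd : ∀ ω, |max (min (W0 ω) 2) (-2)| ≤ 2 := by
        intro ω
        rw [abs_le]
        refine ⟨le_max_right _ _, max_le (min_le_right _ _) (by norm_num)⟩
      obtain ⟨φ, hφm, hφ⟩ := factor hWm hWbd
      obtain ⟨r, hrm, hr⟩ := hι'emb.exists_measurable_extend measurable_id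
        (fun _ => ‹Nonempty S1›)
      refine ⟨fun y => r (φ y), hrm.comp hφm, ?_⟩
      have hZW' : (fun ω => Real.arctan (ι (X ω))) =ᵐ[P]
          (fun ω => max (min (W0 ω) 2) (-2)) := by
        filter_upwards [hZW] with ω hω
        rw [← hω]
        have hb := hZbd ω
        rw [abs_le] at hb
        rw [min_eq_left hb.2, max_eq_left hb.1]
      filter_upwards [hZW'] with ω hω
      have : φ (Y ω) = Real.arctan (ι (X ω)) := by rw [hφ ω, ← hω]
      calc X ω = r (Real.arctan (ι (X ω))) := (congrFun hr (X ω)).symm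
        _ = r (φ (Y ω)) := by rw [this]
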